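/- Let 0 < ε₁ < 2⁻¹⁰ and define real sequences by δ₀ = ε₁, κ₀ = 2, δ_{n+1} = 2κ_n²δ_n², and κ_{n+1} = κ_n/(1 − κ_n²δ_n). Then for every n ∈ ℕ: κ_n²δ_n < 1 (so the recursion is well defined), κ_{n+1} − κ_n < 2^{−n}, δ_n ≤ 2^{5(1 − 2ⁿ)}·ε₁, and κ_n < 4; moreover ∑_{n=0}^{∞} κ_n δ_n < 8ε₁. -/

import Mathlib

set_option maxHeartbeats 1600000 in
/-- The estimates on the recursively defined sequences `δ_n`, `κ_n` appearing in the
proof of the main theorem: `κ_n² δ_n < 1` (so the recursion is well defined),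
`κ_{n+1} - κ_n < 2⁻ⁿ`, `δ_n ≤ 2^{5(1-2ⁿ)} ε₁`, `κ_n < 4`, and `∑ κ_n δ_n < 8 ε₁`. -/
theorem recursive_sequence_estimates (ε₁ : ℝ) (hε₁ : 0 < ε₁) (hε₁' : ε₁ < (2 : ℝ) ^ (-10 : ℤ))
    (δ κ : ℕ → ℝ) (hδ0 : δ 0 = ε₁) (hκ0 : κ 0 = 2)
    (hδ : ∀ n : ℕ, δ (n + 1) = 2 * κ n ^ 2 * δ n ^ 2)
    (hκ : ∀ n : ℕ, κ (n + 1) = κ n / (1 - κ n ^ 2 * δ n)) :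
    (∀ n : ℕ, κ n ^ 2 * δ n < 1) ∧
    (∀ n : ℕ, κ (n + 1) - κ n < (2 : ℝ) ^ (-(n : ℤ))) ∧
    (∀ n : ℕ, δ n ≤ (2 : ℝ) ^ ((5 * (1 - 2 ^ n) : ℤ)) * ε₁) ∧
    (∀ n : ℕ, κ n < 4) ∧
    (∃ S : ℝ, HasSum (fun n : ℕ => κ n * δ n) S ∧ S < 8 * ε₁) := by
  have h12 : (1 : ℝ) ≤ 2 := one_le_two
  have h02 : (0 : ℝ) < 2 := two_pos
  -- exponent inequality : 5*(1-2^n) ≤ -5n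
  have hexp : ∀ n : ℕ, (5 * (1 - 2 ^ n) : ℤ) ≤ -5 * n := by
    intro n
    have h1 : (n : ℤ) < 2 ^ n := by exact_mod_cast (Nat.lt_two_pow_self : n < 2 ^ n)
    linarith
  -- main induction
  have key : ∀ n : ℕ, 0 < δ n ∧ δ n ≤ (2 : ℝ) ^ ((5 * (1 - 2 ^ n) : ℤ)) * ε₁ ∧
      2 ≤ κ n ∧ κ n ≤ 4 - (2 : ℝ) ^ (-(n : ℤ)) := by
    intro n
    induction n with
    | zero =>
      refine ⟨by rw [hδ0]; exact hε₁, by rw [hδ0]; norm_num, by rw [hκ0], by rw [hκ0]; norm_num⟩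
    | succ n ih =>
      obtain ⟨hδpos, hδle, hκlo, hκhi⟩ := ih
      have hκpos : (0 : ℝ) ≤ κ n := by linarith
      have hκ4 : κ n < 4 := by
        have : (0 : ℝ) < (2 : ℝ) ^ (-(n : ℤ)) := zpow_pos h02 _
        linarith
      have hκsq : κ n ^ 2 ≤ 16 := by nlinarith
      -- bound on x = κ n ^ 2 * δ n
      have hxle : κ n ^ 2 * δ n < (2 : ℝ) ^ (-6 - 5 * (n : ℤ)) := by
        have h1 : κ n ^ 2 * δ n ≤ 16 * δ n := by nlinarith
        have h2 : (16 : ℝ) * δ n ≤ 16 * ((2 : ℝ) ^ ((5 * (1 - 2 ^ n) : ℤ)) * ε₁) := by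
          have := hδle; nlinarith [zpow_pos h02 ((5 * (1 - 2 ^ n) : ℤ))]
        have h3 : (16 : ℝ) * ((2 : ℝ) ^ ((5 * (1 - 2 ^ n) : ℤ)) * ε₁) <
            16 * ((2 : ℝ) ^ ((5 * (1 - 2 ^ n) : ℤ)) * (2 : ℝ) ^ (-10 : ℤ)) := by
          have hp : (0 : ℝ) < (2 : ℝ) ^ ((5 * (1 - 2 ^ n) : ℤ)) := zpow_pos h02 _
          nlinarith
        have h4 : (16 : ℝ) * ((2 : ℝ) ^ ((5 * (1 - 2 ^ n) : ℤ)) * (2 : ℝ) ^ (-10 : ℤ)) =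
            (2 : ℝ) ^ ((5 * (1 - 2 ^ n) : ℤ) - 6) := by
          rw [show ((5 * (1 - 2 ^ n) : ℤ) - 6) = 4 + (5 * (1 - 2 ^ n) : ℤ) + (-10) by ring,
            zpow_add₀ (ne_of_gt h02), zpow_add₀ (ne_of_gt h02)]
          norm_num; ring
        have h5 : (2 : ℝ) ^ ((5 * (1 - 2 ^ n) : ℤ) - 6) ≤ (2 : ℝ) ^ (-6 - 5 * (n : ℤ)) :=
          zpow_le_zpow_right₀ h12 (by have := hexp n; linarith)
        linarith
      have hxhalf : κ n ^ 2 * δ n < 1 / 2 := by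
        have : (2 : ℝ) ^ (-6 - 5 * (n : ℤ)) ≤ (2 : ℝ) ^ (-1 : ℤ) :=
          zpow_le_zpow_right₀ h12 (by have : (0:ℤ) ≤ n := Int.ofNat_nonneg n; linarith)
        rw [show ((2:ℝ) ^ (-1 : ℤ)) = 1/2 by norm_num] at this
        linarith
      have hxnonneg : 0 ≤ κ n ^ 2 * δ n := by positivity
      have hden : (1 : ℝ) / 2 < 1 - κ n ^ 2 * δ n := by linarith
      have hdenpos : (0 : ℝ) < 1 - κ n ^ 2 * δ n := by linarith
      constructor
      · rw [hδ]; positivity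
      refine ⟨?_, ?_, ?_⟩
      · -- δ (n+1) bound
        rw [hδ]
        have h1 : 2 * κ n ^ 2 * δ n ^ 2 ≤ 32 * δ n ^ 2 := by nlinarith
        have h2 : δ n ^ 2 ≤ ((2 : ℝ) ^ ((5 * (1 - 2 ^ n) : ℤ)) * ε₁) ^ 2 := by
          nlinarith
        have h3 : (32 : ℝ) * (((2 : ℝ) ^ ((5 * (1 - 2 ^ n) : ℤ)) * ε₁) ^ 2) ≤
            (2 : ℝ) ^ ((5 * (1 - 2 ^ (n + 1)) : ℤ)) * ε₁ := by
          have hε2 : ε₁ ^ 2 ≤ (2 : ℝ) ^ (-10 : ℤ) * ε₁ := by nlinarith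
          have heq : (32 : ℝ) * (((2 : ℝ) ^ ((5 * (1 - 2 ^ n) : ℤ))) ^ 2 * ((2 : ℝ) ^ (-10 : ℤ))) =
              (2 : ℝ) ^ ((5 * (1 - 2 ^ (n + 1)) : ℤ)) := by
            rw [← zpow_natCast ((2:ℝ) ^ ((5 * (1 - 2 ^ n) : ℤ))), ← zpow_mul,
              show (32 : ℝ) = (2 : ℝ) ^ (5 : ℤ) by norm_num, ← zpow_add₀ (ne_of_gt h02),
              ← zpow_add₀ (ne_of_gt h02)]
            congr 1
            have : (2 : ℤ) ^ (n + 1) = 2 * 2 ^ n := by ring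
            push_cast
            rw [this]; ring
          have hp : (0 : ℝ) < ((2 : ℝ) ^ ((5 * (1 - 2 ^ n) : ℤ))) ^ 2 := by positivity
          calc (32 : ℝ) * (((2 : ℝ) ^ ((5 * (1 - 2 ^ n) : ℤ)) * ε₁) ^ 2)
              = 32 * (((2 : ℝ) ^ ((5 * (1 - 2 ^ n) : ℤ))) ^ 2 * ε₁ ^ 2) := by ring
            _ ≤ 32 * (((2 : ℝ) ^ ((5 * (1 - 2 ^ n) : ℤ))) ^ 2 * ((2 : ℝ) ^ (-10 : ℤ) * ε₁)) := by
                nlinarith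
            _ = (32 : ℝ) * (((2 : ℝ) ^ ((5 * (1 - 2 ^ n) : ℤ))) ^ 2 * ((2 : ℝ) ^ (-10 : ℤ))) * ε₁ := by
                ring
            _ = (2 : ℝ) ^ ((5 * (1 - 2 ^ (n + 1)) : ℤ)) * ε₁ := by rw [heq]
        nlinarith
      · -- 2 ≤ κ (n+1)
        rw [hκ]
        have : 1 - κ n ^ 2 * δ n ≤ 1 := by linarith
        calc (2 : ℝ) ≤ κ n := hκlo
          _ ≤ κ n / (1 - κ n ^ 2 * δ n) := by
              rw [le_div_iff₀ hdenpos]; nlinarith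
      · -- κ (n+1) ≤ 4 - 2^{-(n+1)}
        rw [hκ]
        have hinc : κ n / (1 - κ n ^ 2 * δ n) ≤ κ n + 8 * (κ n ^ 2 * δ n) := by
          rw [div_le_iff₀ hdenpos]
          have haux : 0 ≤ (κ n ^ 2 * δ n) * (8 - κ n - 8 * (κ n ^ 2 * δ n)) :=
            mul_nonneg hxnonneg (by linarith)
          have hexp2 : (κ n + 8 * (κ n ^ 2 * δ n)) * (1 - κ n ^ 2 * δ n) - κ n =
              (κ n ^ 2 * δ n) * (8 - κ n - 8 * (κ n ^ 2 * δ n)) := by ring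
          linarith
        have hsmall : 8 * (κ n ^ 2 * δ n) ≤ (2 : ℝ) ^ (-(n : ℤ) - 1) := by
          have h1 : (8 : ℝ) * (κ n ^ 2 * δ n) ≤ 8 * (2 : ℝ) ^ (-6 - 5 * (n : ℤ)) := by
            linarith
          have h2 : (8 : ℝ) * (2 : ℝ) ^ (-6 - 5 * (n : ℤ)) = (2 : ℝ) ^ (-3 - 5 * (n : ℤ)) := by
            rw [show (-3 - 5 * (n : ℤ)) = 3 + (-6 - 5 * (n : ℤ)) by ring,
              zpow_add₀ (ne_of_gt h02)]
            norm_num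
          have h3 : (2 : ℝ) ^ (-3 - 5 * (n : ℤ)) ≤ (2 : ℝ) ^ (-(n : ℤ) - 1) :=
            zpow_le_zpow_right₀ h12 (by have : (0:ℤ) ≤ n := Int.ofNat_nonneg n; linarith)
          linarith
        have heq2 : (2 : ℝ) ^ (-((n : ℤ) + 1)) = (2 : ℝ) ^ (-(n : ℤ) - 1) := by ring_nf
        have h2n : (2 : ℝ) ^ (-(n : ℤ) - 1) + (2 : ℝ) ^ (-(n : ℤ) - 1) = (2 : ℝ) ^ (-(n : ℤ)) := by
          rw [show (-(n : ℤ)) = (-(n : ℤ) - 1) + 1 by ring, zpow_add₀ (ne_of_gt h02)]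
          ring
        have : κ n / (1 - κ n ^ 2 * δ n) ≤ 4 - (2 : ℝ) ^ (-(n : ℤ) - 1) := by
          calc κ n / (1 - κ n ^ 2 * δ n) ≤ κ n + 8 * (κ n ^ 2 * δ n) := hinc
            _ ≤ (4 - (2 : ℝ) ^ (-(n : ℤ))) + (2 : ℝ) ^ (-(n : ℤ) - 1) := by linarith
            _ = 4 - (2 : ℝ) ^ (-(n : ℤ) - 1) := by linarith
        calc κ n / (1 - κ n ^ 2 * δ n) ≤ 4 - (2 : ℝ) ^ (-(n : ℤ) - 1) := this
          _ = 4 - (2 : ℝ) ^ (-((n : ℕ) + 1 : ℤ)) := by rw [heq2]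
          _ = 4 - (2 : ℝ) ^ (-(((n : ℕ) + 1 : ℕ) : ℤ)) := by push_cast; ring_nf
  have hδpos : ∀ n, 0 < δ n := fun n => (key n).1
  have hδle : ∀ n, δ n ≤ (2 : ℝ) ^ ((5 * (1 - 2 ^ n) : ℤ)) * ε₁ := fun n => (key n).2.1
  have hκlo : ∀ n, 2 ≤ κ n := fun n => (key n).2.2.1
  have hκ4 : ∀ n, κ n < 4 := by
    intro n
    have := (key n).2.2.2
    have h := zpow_pos h02 (-(n : ℤ))
    linarith
  -- bound on x
  have hxle : ∀ n, κ n ^ 2 * δ n < (2 : ℝ) ^ (-6 - 5 * (n : ℤ)) := by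
    intro n
    have hκpos : (0 : ℝ) ≤ κ n := by linarith [hκlo n]
    have hκsq : κ n ^ 2 ≤ 16 := by nlinarith [hκ4 n, hκlo n]
    have h1 : κ n ^ 2 * δ n ≤ 16 * δ n := by nlinarith [hδpos n]
    have h2 : (16 : ℝ) * δ n ≤ 16 * ((2 : ℝ) ^ ((5 * (1 - 2 ^ n) : ℤ)) * ε₁) := by
      nlinarith [hδle n]
    have h3 : (16 : ℝ) * ((2 : ℝ) ^ ((5 * (1 - 2 ^ n) : ℤ)) * ε₁) <
        16 * ((2 : ℝ) ^ ((5 * (1 - 2 ^ n) : ℤ)) * (2 : ℝ) ^ (-10 : ℤ)) := by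
      have hp : (0 : ℝ) < (2 : ℝ) ^ ((5 * (1 - 2 ^ n) : ℤ)) := zpow_pos h02 _
      nlinarith
    have h4 : (16 : ℝ) * ((2 : ℝ) ^ ((5 * (1 - 2 ^ n) : ℤ)) * (2 : ℝ) ^ (-10 : ℤ)) =
        (2 : ℝ) ^ ((5 * (1 - 2 ^ n) : ℤ) - 6) := by
      rw [show ((5 * (1 - 2 ^ n) : ℤ) - 6) = 4 + (5 * (1 - 2 ^ n) : ℤ) + (-10) by ring,
        zpow_add₀ (ne_of_gt h02), zpow_add₀ (ne_of_gt h02)]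
      norm_num; ring
    have h5 : (2 : ℝ) ^ ((5 * (1 - 2 ^ n) : ℤ) - 6) ≤ (2 : ℝ) ^ (-6 - 5 * (n : ℤ)) :=
      zpow_le_zpow_right₀ h12 (by have := hexp n; linarith)
    linarith
  have hxlt1 : ∀ n, κ n ^ 2 * δ n < 1 := by
    intro n
    have h1 : (2 : ℝ) ^ (-6 - 5 * (n : ℤ)) ≤ (2 : ℝ) ^ (0 : ℤ) :=
      zpow_le_zpow_right₀ h12 (by have : (0:ℤ) ≤ n := Int.ofNat_nonneg n; linarith)
    simp only [zpow_zero] at h1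
    linarith [hxle n]
  have hxhalf : ∀ n, κ n ^ 2 * δ n < 1 / 2 := by
    intro n
    have h1 : (2 : ℝ) ^ (-6 - 5 * (n : ℤ)) ≤ (2 : ℝ) ^ (-1 : ℤ) :=
      zpow_le_zpow_right₀ h12 (by have : (0:ℤ) ≤ n := Int.ofNat_nonneg n; linarith)
    rw [show ((2:ℝ) ^ (-1 : ℤ)) = 1/2 by norm_num] at h1
    linarith [hxle n]
  refine ⟨hxlt1, ?_, hδle, hκ4, ?_⟩
  · -- increment bound
    intro n
    have hxnonneg : 0 ≤ κ n ^ 2 * δ n := mul_nonneg (sq_nonneg _) (le_of_lt (hδpos n))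
    have hdenpos : (0 : ℝ) < 1 - κ n ^ 2 * δ n := by linarith [hxhalf n]
    have hκpos : (0 : ℝ) < κ n := by linarith [hκlo n]
    rw [hκ]
    have hinc : κ n / (1 - κ n ^ 2 * δ n) ≤ κ n + 8 * (κ n ^ 2 * δ n) := by
      rw [div_le_iff₀ hdenpos]
      have haux : 0 ≤ (κ n ^ 2 * δ n) * (8 - κ n - 8 * (κ n ^ 2 * δ n)) :=
        mul_nonneg hxnonneg (by linarith [hκ4 n, hxhalf n])
      have hexp2 : (κ n + 8 * (κ n ^ 2 * δ n)) * (1 - κ n ^ 2 * δ n) - κ n =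
          (κ n ^ 2 * δ n) * (8 - κ n - 8 * (κ n ^ 2 * δ n)) := by ring
      linarith
    have h2' : (8 : ℝ) * (2 : ℝ) ^ (-6 - 5 * (n : ℤ)) = (2 : ℝ) ^ (-3 - 5 * (n : ℤ)) := by
      rw [show (-3 - 5 * (n : ℤ)) = 3 + (-6 - 5 * (n : ℤ)) by ring, zpow_add₀ (ne_of_gt h02)]
      norm_num
    have h3' : (2 : ℝ) ^ (-3 - 5 * (n : ℤ)) < (2 : ℝ) ^ (-(n : ℤ)) := by
      apply zpow_lt_zpow_right₀ one_lt_two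
      have : (0:ℤ) ≤ n := Int.ofNat_nonneg n
      linarith
    have := hxle n
    nlinarith
  · -- the sum
    have hb : ∀ n : ℕ, κ n * δ n ≤ (4 * ε₁) * (1 / 32 : ℝ) ^ n := by
      intro n
      have h1 : κ n * δ n ≤ 4 * δ n := by nlinarith [hκ4 n, hκlo n, hδpos n]
      have h2 : δ n ≤ (2 : ℝ) ^ (-5 * (n : ℤ)) * ε₁ := by
        have := hδle n
        have h5 : (2 : ℝ) ^ ((5 * (1 - 2 ^ n) : ℤ)) ≤ (2 : ℝ) ^ (-5 * (n : ℤ)) :=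
          zpow_le_zpow_right₀ h12 (hexp n)
        nlinarith [zpow_pos h02 (-5 * (n : ℤ))]
      have h3 : (2 : ℝ) ^ (-5 * (n : ℤ)) = (1 / 32 : ℝ) ^ n := by
        rw [show (-5 * (n : ℤ)) = (-5 : ℤ) * (n : ℤ) by ring, zpow_mul, zpow_natCast]
        norm_num
      rw [h3] at h2
      nlinarith [pow_pos (show (0:ℝ) < 1/32 by norm_num) n]
    have hnn : ∀ n : ℕ, 0 ≤ κ n * δ n := by
      intro n; have := hκlo n; have := hδpos n; nlinarith
    have hgsum : Summable (fun n : ℕ => (4 * ε₁) * (1 / 32 : ℝ) ^ n) :=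
      (summable_geometric_of_lt_one (by norm_num) (by norm_num)).mul_left _
    have hsum : Summable (fun n : ℕ => κ n * δ n) :=
      Summable.of_nonneg_of_le hnn hb hgsum
    refine ⟨∑' n, κ n * δ n, hsum.hasSum, ?_⟩
    have hle : ∑' n, κ n * δ n ≤ ∑' n, (4 * ε₁) * (1 / 32 : ℝ) ^ n :=
      Summable.tsum_le_tsum hb hsum hgsum
    have hgeval : ∑' n : ℕ, (4 * ε₁) * (1 / 32 : ℝ) ^ n = (4 * ε₁) * (1 - 1/32)⁻¹ := by
      rw [tsum_mul_left, tsum_geometric_of_lt_one (by norm_num) (by norm_num)]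
    rw [hgeval] at hle
    nlinarith
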